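/- Either there exists x ∈ ℝⁿ with Ax = b and x ≥ 0 (componentwise), or there exist v ∈ ℝᵐ and w ∈ ℝⁿ with w ≥ 0 componentwise and w ≠ 0 such that for every x̄ ∈ ℝⁿ with 0 ≤ x̄ ≤ u (componentwise), (vᵀA + wᵀ)x̄ < vᵀb + (1/(2n))·wᵀu. -/

import Mathlib

open Matrix


/-- Farkas lemma for finitely many vectors, by induction on the number of vectors. -/
lemma farkas_aux (m : ℕ) : ∀ (k : ℕ) (a : Fin k → Fin m → ℝ) (b : Fin m → ℝ),
    (∃ c : Fin k → ℝ, (∀ i, 0 ≤ c i) ∧ ∑ i, c i • a i = b) ∨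
    (∃ y : Fin m → ℝ, (∀ i, y ⬝ᵥ a i ≤ 0) ∧ 0 < y ⬝ᵥ b) := by
  intro k
  induction k with
  | zero =>
    intro a b
    by_cases hb : b = 0
    · left; exact ⟨0, fun i => le_refl 0, by simp [hb]⟩
    · right
      refine ⟨b, fun i => i.elim0, ?_⟩
      have h0 : b ⬝ᵥ b ≠ 0 := by
        simpa [dotProduct_self_eq_zero] using hb
      have h1 : 0 ≤ b ⬝ᵥ b := Finset.sum_nonneg fun i _ => mul_self_nonneg _
      exact lt_of_le_of_ne h1 (Ne.symm h0)
  | succ k IH =>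
    intro a b
    set a0 : Fin k → Fin m → ℝ := fun i => a i.castSucc with ha0
    set al : Fin m → ℝ := a (Fin.last k) with hal
    rcases IH a0 b with ⟨c, hc, hsum⟩ | ⟨y, hy, hyb⟩
    · left
      refine ⟨Fin.snoc c 0, ?_, ?_⟩
      · intro i
        refine Fin.lastCases ?_ ?_ i <;> simp [Fin.snoc_last, Fin.snoc_castSucc]
        exact hc
      · rw [Fin.sum_univ_castSucc]
        simp [Fin.snoc_last, Fin.snoc_castSucc, hsum]
        exact hsum
    · by_cases hl : y ⬝ᵥ al ≤ 0
      · right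
        refine ⟨y, ?_, hyb⟩
        intro i
        refine Fin.lastCases hl (fun j => hy j) i
      · push_neg at hl
        set d : ℝ := y ⬝ᵥ al with hd
        have hd0 : d ≠ 0 := ne_of_gt hl
        set a' : Fin k → Fin m → ℝ := fun i => a0 i - ((y ⬝ᵥ a0 i) / d) • al with ha'
        set b' : Fin m → ℝ := b - ((y ⬝ᵥ b) / d) • al with hb'
        rcases IH a' b' with ⟨c, hc, hsum⟩ | ⟨z, hz, hzb⟩
        · left
          set γ : ℝ := (y ⬝ᵥ b) / d - ∑ i, c i * ((y ⬝ᵥ a0 i) / d) with hγ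
          have hγ0 : 0 ≤ γ := by
            have h1 : 0 ≤ (y ⬝ᵥ b) / d := le_of_lt (div_pos hyb hl)
            have h2 : ∑ i, c i * ((y ⬝ᵥ a0 i) / d) ≤ 0 := by
              apply Finset.sum_nonpos
              intro i _
              exact mul_nonpos_of_nonneg_of_nonpos (hc i)
                (div_nonpos_of_nonpos_of_nonneg (hy i) (le_of_lt hl))
            rw [hγ]; linarith
          refine ⟨Fin.snoc c γ, ?_, ?_⟩
          · intro i
            refine Fin.lastCases ?_ ?_ i <;> simp [Fin.snoc_last, Fin.snoc_castSucc]
            · exact hγ0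
            · exact hc
          · have expand : ∑ i, c i • a' i
                = ∑ i, c i • a0 i - (∑ i, c i * ((y ⬝ᵥ a0 i) / d)) • al := by
              rw [Finset.sum_smul]
              rw [← Finset.sum_sub_distrib]
              apply Finset.sum_congr rfl
              intro i _
              rw [ha']
              rw [smul_sub, smul_smul]
            rw [expand] at hsum
            rw [Fin.sum_univ_castSucc]
            simp only [Fin.snoc_last, Fin.snoc_castSucc]
            have : ∑ i, c i • a0 i = b' + (∑ i, c i * ((y ⬝ᵥ a0 i) / d)) • al := by
              rw [← hsum]; abel
            rw [this, hb', hγ]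
            module
        · right
          set y' : Fin m → ℝ := z - ((z ⬝ᵥ al) / d) • y with hy'
          have key : ∀ w : Fin m → ℝ, y' ⬝ᵥ w = z ⬝ᵥ w - ((z ⬝ᵥ al) / d) * (y ⬝ᵥ w) := by
            intro w
            simp [hy', sub_dotProduct, smul_dotProduct, smul_eq_mul]
          refine ⟨y', ?_, ?_⟩
          · intro i
            refine Fin.lastCases ?_ ?_ i
            · rw [key]
              field_simp
              rw [← hal, ← hd]
              simp
            · intro j
              have h1 : z ⬝ᵥ a' j ≤ 0 := hz j
              have h2 : z ⬝ᵥ a' j = z ⬝ᵥ a0 j - ((y ⬝ᵥ a0 j) / d) * (z ⬝ᵥ al) := by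
                simp [ha', dotProduct_sub, dotProduct_smul, smul_eq_mul]
              rw [key]
              rw [h2] at h1
              have : z ⬝ᵥ a0 j - (z ⬝ᵥ al) / d * (y ⬝ᵥ a0 j)
                  = z ⬝ᵥ a0 j - ((y ⬝ᵥ a0 j) / d) * (z ⬝ᵥ al) := by
                field_simp
              rw [this]
              exact h1
          · have h2 : z ⬝ᵥ b' = z ⬝ᵥ b - ((y ⬝ᵥ b) / d) * (z ⬝ᵥ al) := by
              simp [hb', dotProduct_sub, dotProduct_smul, smul_eq_mul]
            rw [key]
            rw [h2] at hzb
            have : z ⬝ᵥ b - (z ⬝ᵥ al) / d * (y ⬝ᵥ b)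
                = z ⬝ᵥ b - ((y ⬝ᵥ b) / d) * (z ⬝ᵥ al) := by
              field_simp
            rw [this]
            exact hzb

/-- Theorem 1 of the paper (dichotomy of the Basic subroutine): either the system
`Ax = b, x ≥ 0` has a solution, or there is a separating pair `(v, w)`. -/
theorem statement0 {m n : ℕ} (hm : 0 < m) (hn : 0 < n)
    (A : Matrix (Fin m) (Fin n) ℤ) (b : Fin m → ℤ)
    (hA : (A.map (Int.cast : ℤ → ℝ)).rank = m)
    (u : Fin n → ℝ) (hu : ∀ i, 0 < u i) :
    (∃ x : Fin n → ℝ,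
        (A.map (Int.cast : ℤ → ℝ)) *ᵥ x = (fun i => (b i : ℝ)) ∧ ∀ j, 0 ≤ x j) ∨
    (∃ (v : Fin m → ℝ) (w : Fin n → ℝ), (∀ j, 0 ≤ w j) ∧ w ≠ 0 ∧
        ∀ xbar : Fin n → ℝ, (∀ j, 0 ≤ xbar j) → (∀ j, xbar j ≤ u j) →
          ((A.map (Int.cast : ℤ → ℝ))ᵀ *ᵥ v + w) ⬝ᵥ xbar <
            v ⬝ᵥ (fun i => (b i : ℝ)) + (1 / (2 * (n : ℝ))) * (w ⬝ᵥ u)) := by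
  set AR : Matrix (Fin m) (Fin n) ℝ := A.map (Int.cast : ℤ → ℝ) with hAR
  set bR : Fin m → ℝ := fun i => (b i : ℝ) with hbR
  set col : Fin n → Fin m → ℝ := fun j i => AR i j with hcol
  rcases farkas_aux m n col bR with ⟨c, hc, hsum⟩ | ⟨y, hy, hyb⟩
  · left
    refine ⟨c, ?_, hc⟩
    funext i
    have := congrFun hsum i
    simpa [Matrix.mulVec, dotProduct, hcol, Finset.sum_apply, mul_comm] using this
  · right
    set S : ℝ := ∑ j, u j with hS
    have hS0 : 0 < S := Finset.sum_pos (fun j _ => hu j) (by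
      simpa using Finset.univ_nonempty_iff.mpr ⟨⟨0, hn⟩⟩)
    set p : ℝ := y ⬝ᵥ bR with hp
    set t : ℝ := S / p with ht
    have ht0 : 0 < t := div_pos hS0 hyb
    refine ⟨t • y, fun _ => 1, fun j => zero_le_one, ?_, ?_⟩
    · intro h
      have := congrFun h ⟨0, hn⟩
      simp at this
    · intro xbar hx0 hxu
      have hAty : ∀ j, (ARᵀ *ᵥ y) j ≤ 0 := by
        intro j
        have := hy j
        simpa [Matrix.mulVec, dotProduct, hcol, mul_comm] using this
      have lhs_eq : (ARᵀ *ᵥ (t • y) + (fun _ => (1:ℝ))) ⬝ᵥ xbar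
          = t * ((ARᵀ *ᵥ y) ⬝ᵥ xbar) + ∑ j, xbar j := by
        rw [Matrix.mulVec_smul, add_dotProduct, smul_dotProduct]
        simp [dotProduct]
      have h1 : (ARᵀ *ᵥ y) ⬝ᵥ xbar ≤ 0 :=
        Finset.sum_nonpos fun j _ => mul_nonpos_of_nonpos_of_nonneg (hAty j) (hx0 j)
      have h2 : ∑ j, xbar j ≤ S := Finset.sum_le_sum fun j _ => hxu j
      have h3 : t * ((ARᵀ *ᵥ y) ⬝ᵥ xbar) ≤ 0 :=
        mul_nonpos_of_nonneg_of_nonpos (le_of_lt ht0) h1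
      have hvb : (t • y) ⬝ᵥ bR = S := by
        rw [smul_dotProduct, smul_eq_mul, ← hp, ht, div_mul_cancel₀]
        exact ne_of_gt hyb
      have hwu : (fun _ => (1:ℝ)) ⬝ᵥ u = S := by simp [dotProduct, hS]
      have hslack : 0 < (1 / (2 * (n : ℝ))) * S := by
        apply mul_pos _ hS0
        have : (0:ℝ) < (n:ℝ) := by exact_mod_cast hn
        positivity
      rw [lhs_eq, hvb, hwu]
      linarith
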